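/- Let F = ℚ(√5) with ring of integers ℤ_F, and let F_2, F_6, F_{10} be the Gundlach generators of the graded ℚ-algebra of symmetric Hilbert modular forms for SL(ℤ_F ⊕ ℤ_F^∨), of weights 2, 6, 10. Define Gundlach invariants g_1 = F_2⁵/F_{10} and g_2 = F_2²F_6/F_{10}. If f/g is any quotient of two symmetric Hilbert modular forms of equal weight w with g nonzero, then f/g can be expressed as a rational fraction in g_1 and g_2 of total degree at most w/6. -/

import Mathlib

noncomputable section

open MvPolynomial

/- By Gundlach's theorem, the graded `ℚ`-algebra of symmetric Hilbert modular
forms for `F = ℚ(√5)` and level `SL(ℤ_F ⊕ ℤ_F^∨)` is the free polynomial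
algebra `ℚ[F₂, F₆, F₁₀]` on generators of weights `2, 6, 10`. We realize it
as `MvPolynomial (Fin 3) ℚ` with `X 0 = F₂`, `X 1 = F₆`, `X 2 = F₁₀`, graded
by the weight function `![2, 6, 10]`, and work in its fraction field. -/

/-- The field of fractions of the ring of symmetric Hilbert modular forms
for `ℚ(√5)`. -/
abbrev HilbertFF : Type := FractionRing (MvPolynomial (Fin 3) ℚ)

/-- The canonical map from modular forms to the fraction field. -/
def toFF : MvPolynomial (Fin 3) ℚ →+* HilbertFF :=
  algebraMap (MvPolynomial (Fin 3) ℚ) HilbertFF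

/-- The first Gundlach invariant `g₁ = F₂⁵/F₁₀`. -/
def gundlach1 : HilbertFF := toFF (X 0 ^ 5) / toFF (X 2)

/-- The second Gundlach invariant `g₂ = F₂²·F₆/F₁₀`. -/
def gundlach2 : HilbertFF := toFF (X 0 ^ 2 * X 1) / toFF (X 2)

/-- Evaluation of a rational expression `P ∈ ℚ[Y₁, Y₂]` at the Gundlach
invariants `(g₁, g₂)`. -/
def evalGundlach (P : MvPolynomial (Fin 2) ℚ) : HilbertFF :=
  eval₂ (toFF.comp (C : ℚ →+* MvPolynomial (Fin 3) ℚ))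
    ![gundlach1, gundlach2] P

lemma toFF_inj : Function.Injective toFF :=
  IsFractionRing.injective (MvPolynomial (Fin 3) ℚ) HilbertFF

lemma toFF_X_ne (i : Fin 3) : toFF (X i) ≠ 0 := by
  intro h
  exact X_ne_zero i (toFF_inj (h.trans (map_zero toFF).symm))

lemma weight_eq (d : Fin 3 →₀ ℕ) :
    (Finsupp.weight ![2, 6, 10] d : ℕ) = 2 * d 0 + 6 * d 1 + 10 * d 2 := by
  rw [Finsupp.weight_apply, Finsupp.sum_fintype _ _ (by simp), Fin.sum_univ_three]
  simp [mul_comm]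

/-- Monomial identity in the fraction field. -/
lemma mon_key (q : ℚ) (a b c k : ℕ) :
    toFF (C q) * gundlach1 ^ k * gundlach2 ^ b *
      toFF (X 0) ^ (a + 3 * b + 5 * c) * toFF (X 2) ^ (b + c + k)
    = toFF (C q * (X 0 ^ a * X 1 ^ b * X 2 ^ c)) * toFF (X 0) ^ (5 * (b + c + k)) := by
  have hZ : toFF (X 2) ≠ 0 := toFF_X_ne 2
  simp only [gundlach1, gundlach2, map_mul, map_pow, div_pow]
  field_simp
  ring

def Pof (N : ℕ) (f : MvPolynomial (Fin 3) ℚ) : MvPolynomial (Fin 2) ℚ :=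
  ∑ d ∈ f.support, C (coeff d f) * X 0 ^ (N - (d 1 + d 2)) * X 1 ^ (d 1)

lemma key (w : ℕ) (f : MvPolynomial (Fin 3) ℚ)
    (hf : IsWeightedHomogeneous ![2, 6, 10] f w) :
    evalGundlach (Pof (w / 6) f) * toFF (X 0) ^ (w / 2) * toFF (X 2) ^ (w / 6)
      = toFF f * toFF (X 0) ^ (5 * (w / 6)) := by
  conv_rhs => rw [f.as_sum]
  rw [Pof, evalGundlach, eval₂_sum, map_sum, Finset.sum_mul, Finset.sum_mul, Finset.sum_mul]
  refine Finset.sum_congr rfl fun d hd => ?_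
  have hc : coeff d f ≠ 0 := mem_support_iff.mp hd
  have hw : 2 * d 0 + 6 * d 1 + 10 * d 2 = w := by
    rw [← weight_eq]; exact hf hc
  have h2 : w / 2 = d 0 + 3 * d 1 + 5 * d 2 := by omega
  rw [eval₂_mul, eval₂_mul, eval₂_pow, eval₂_pow, eval₂_C, eval₂_X, eval₂_X]
  simp only [Matrix.cons_val_zero, Matrix.cons_val_one, Matrix.head_cons, RingHom.coe_comp,
    Function.comp_apply]
  rw [monomial_eq, Finsupp.prod_pow, Fin.prod_univ_three, h2]
  have h := mon_key (coeff d f) (d 0) (d 1) (d 2) (w / 6 - (d 1 + d 2))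
  rwa [show d 1 + d 2 + (w / 6 - (d 1 + d 2)) = w / 6 by omega] at h

/-- Any quotient `f/g` of two symmetric Hilbert modular forms for `ℚ(√5)` of
equal weight `w` (with `g ≠ 0`) can be written as a rational fraction in the
Gundlach invariants `g₁, g₂` of total degree at most `w/6`. -/
theorem hilbert_modular_function_degree_le
    (w : ℕ) (f g : MvPolynomial (Fin 3) ℚ)
    (hf : IsWeightedHomogeneous ![2, 6, 10] f w)
    (hg : IsWeightedHomogeneous ![2, 6, 10] g w)
    (hg0 : g ≠ 0) :
    ∃ P Q : MvPolynomial (Fin 2) ℚ,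
      evalGundlach Q ≠ 0 ∧
      toFF f * evalGundlach Q = toFF g * evalGundlach P ∧
      (P.totalDegree : ℝ) ≤ (w : ℝ) / 6 ∧
      (Q.totalDegree : ℝ) ≤ (w : ℝ) / 6 := by
  set N := w / 6 with hN
  have hX0 : toFF (X 0) ≠ 0 := toFF_X_ne 0
  have hX2 : toFF (X 2) ≠ 0 := toFF_X_ne 2
  have hkf := key w f hf
  have hkg := key w g hg
  have hdeg : ∀ h : MvPolynomial (Fin 3) ℚ, IsWeightedHomogeneous ![2, 6, 10] h w →
      (Pof N h).totalDegree ≤ N := by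
    intro h hh
    refine (totalDegree_finset_sum _ _).trans (Finset.sup_le fun d hd => ?_)
    have hw : 2 * d 0 + 6 * d 1 + 10 * d 2 = w := by
      rw [← weight_eq]; exact hh (mem_support_iff.mp hd)
    have step : ((C (coeff d h) : MvPolynomial (Fin 2) ℚ) * X 0 ^ (N - (d 1 + d 2)) * X 1 ^ (d 1)).totalDegree
        ≤ (0 + (N - (d 1 + d 2))) + d 1 := by
      refine (totalDegree_mul _ _).trans ?_
      rw [totalDegree_X_pow]
      refine Nat.add_le_add_right ((totalDegree_mul _ _).trans ?_) _
      rw [totalDegree_C, totalDegree_X_pow]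
    refine step.trans ?_
    simp only [hN]
    omega
  have hcast : ∀ m : ℕ, m ≤ N → (m : ℝ) ≤ (w : ℝ) / 6 := by
    intro m hm
    rw [le_div_iff₀ (by norm_num : (0:ℝ) < 6)]
    have : m * 6 ≤ w := by simp only [hN] at hm; omega
    exact_mod_cast this
  refine ⟨Pof N f, Pof N g, ?_, ?_, hcast _ (hdeg f hf), hcast _ (hdeg g hg)⟩
  · intro h0
    rw [h0, zero_mul, zero_mul] at hkg
    exact (mul_ne_zero (fun hz => hg0 (toFF_inj (hz.trans (map_zero toFF).symm)))
      (pow_ne_zero _ hX0)) hkg.symm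
  · refine mul_right_cancel₀ (b := toFF (X 0) ^ (w / 2) * toFF (X 2) ^ N)
      (mul_ne_zero (pow_ne_zero _ hX0) (pow_ne_zero _ hX2)) ?_
    calc (toFF f * evalGundlach (Pof N g)) * (toFF (X 0) ^ (w / 2) * toFF (X 2) ^ N)
        = toFF f * (evalGundlach (Pof N g) * toFF (X 0) ^ (w / 2) * toFF (X 2) ^ N) := by ring
      _ = toFF f * (toFF g * toFF (X 0) ^ (5 * N)) := by rw [hkg]
      _ = toFF g * (evalGundlach (Pof N f) * toFF (X 0) ^ (w / 2) * toFF (X 2) ^ N) := by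
          rw [hkf]; ring
      _ = _ := by ring

end
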